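/- Let V be a finite-dimensional ℚ-vector space, P a finite set, c : P → V a function, and B : P → ℝ≥0. For a decomposition Σ = ((b₁,D₁),…,(b_k,D_k)) of B (i.e., bᵢ > 0 real, Dᵢ : P → ℕ nonzero, and Σᵢ bᵢDᵢ(p) ≤ B(p) for all p), define f(Σ) = dim_ℚ span{ Σ_{p∈P} Dᵢ(p)·c(p) : 1 ≤ i ≤ k } − Σᵢ bᵢ. Then the infimum of f(Σ) over all decompositions Σ of B is attained by some decomposition. -/

import Mathlib

set_option linter.unusedSectionVars false

open Filter Topology Finset

lemma nat_tendsto_eventually_eq {a : ℕ → ℕ} {x : ℝ}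
    (h : Tendsto (fun j => (a j : ℝ)) atTop (𝓝 x)) :
    ∃ n : ℕ, (n : ℝ) = x ∧ ∀ᶠ j in atTop, a j = n := by
  have h2 : ∀ᶠ j in atTop, |(a j : ℝ) - x| < 1/2 := by
    obtain ⟨Nn, hNn⟩ := Metric.tendsto_atTop.1 h (1/2) (by norm_num)
    filter_upwards [eventually_ge_atTop Nn] with j hj
    simpa [Real.dist_eq] using hNn j hj
  obtain ⟨N, hN⟩ := eventually_atTop.1 h2
  have heq : ∀ j ≥ N, a j = a N := by
    intro j hj
    by_contra hne
    have hz : (a j : ℤ) ≠ (a N : ℤ) := by exact_mod_cast hne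
    have h1 : (1:ℤ) ≤ |(a j : ℤ) - (a N : ℤ)| := Int.one_le_abs (sub_ne_zero.2 hz)
    have h1' : (1:ℝ) ≤ |(a j : ℝ) - (a N : ℝ)| := by exact_mod_cast h1
    have := hN j hj
    have := hN N le_rfl
    have habs : |(a j : ℝ) - (a N : ℝ)| ≤ |(a j : ℝ) - x| + |x - (a N : ℝ)| := by
      have := abs_sub_le ((a j : ℝ)) x ((a N : ℝ)); linarith [this]
    rw [abs_sub_comm x ((a N : ℝ))] at habs
    linarith
  have hev : ∀ᶠ j in atTop, a j = a N := eventually_atTop.2 ⟨N, heq⟩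
  have hconst : Tendsto (fun _ : ℕ => (a N : ℝ)) atTop (𝓝 ((a N : ℕ) : ℝ)) :=
    tendsto_const_nhds
  have hx : x = (a N : ℝ) :=
    tendsto_nhds_unique h (hconst.congr' (by filter_upwards [hev] with j hj; rw [hj]))
  exact ⟨a N, hx.symm, hev⟩

lemma pad_sum {M : Type*} [AddCommMonoid M] {k m : ℕ} (hkm : k ≤ m) (f : Fin k → M) :
    (∑ i : Fin m, if h : (i : ℕ) < k then f ⟨i, h⟩ else 0) = ∑ i : Fin k, f i := by
  calc (∑ i : Fin m, if h : (i : ℕ) < k then f ⟨i, h⟩ else 0)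
      = ∑ j ∈ Finset.range m, (if h : j < k then f ⟨j, h⟩ else 0) :=
        Fin.sum_univ_eq_sum_range (fun j => if h : j < k then f ⟨j, h⟩ else 0) m
    _ = ∑ j ∈ Finset.range k, (if h : j < k then f ⟨j, h⟩ else 0) :=
        (Finset.sum_subset (Finset.range_subset_range.2 hkm)
          (fun x _ hnx => dif_neg (by simpa using hnx))).symm
    _ = ∑ i : Fin k, (if h : ((i : ℕ)) < k then f ⟨i, h⟩ else 0) :=
        (Fin.sum_univ_eq_sum_range (fun j => if h : j < k then f ⟨j, h⟩ else 0) k).symm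
    _ = ∑ i : Fin k, f i := Finset.sum_congr rfl fun i _ => by simp

lemma filter_step {P : Type*} [Fintype P] {k : ℕ} (b : Fin k → ℝ) (D : Fin k → P → ℕ)
    (hb : ∀ i, 0 ≤ b i) (hbD : ∀ i, b i ≠ 0 → D i ≠ 0) :
    ∃ (k' : ℕ) (b' : Fin k' → ℝ) (D' : Fin k' → P → ℕ),
      k' ≤ k ∧ ((∃ i, b i = 0) → k' < k) ∧ (∀ i, 0 < b' i) ∧ (∀ i, D' i ≠ 0) ∧
      (∑ i, b' i = ∑ i, b i) ∧
      (∀ p, ∑ i, b' i * (D' i p : ℝ) = ∑ i, b i * (D i p : ℝ)) ∧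
      (∀ i', ∃ i, D' i' = D i) := by
  classical
  set S : Finset (Fin k) := Finset.univ.filter (fun i => b i ≠ 0) with hS
  set e : Fin S.card ≃ {x // x ∈ S} := S.equivFin.symm with he
  refine ⟨S.card, fun i => b (e i), fun i => D (e i), ?_, ?_, ?_, ?_, ?_, ?_, ?_⟩
  · simpa using Finset.card_le_univ S
  · rintro ⟨i₀, hi₀⟩
    have : S ⊂ Finset.univ := by
      refine Finset.ssubset_univ_iff.2 (fun hcontra => ?_)
      have : i₀ ∈ S := hcontra ▸ Finset.mem_univ i₀
      simp [hS, hi₀] at this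
    simpa using Finset.card_lt_card this
  · intro i
    exact lt_of_le_of_ne (hb _) (Ne.symm (Finset.mem_filter.1 (e i).2).2)
  · intro i
    exact hbD _ (Finset.mem_filter.1 (e i).2).2
  · rw [Equiv.sum_comp e (fun x : {x // x ∈ S} => b x), Finset.sum_coe_sort S b]
    exact Finset.sum_filter_of_ne (fun x _ hx => hx)
  · intro p
    rw [Equiv.sum_comp e (fun x : {x // x ∈ S} => b x * (D x p : ℝ)),
      Finset.sum_coe_sort S (fun x => b x * (D x p : ℝ))]
    refine Finset.sum_filter_of_ne (fun x _ hx => ?_)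
    intro hbx; rw [hbx] at hx; simp at hx
  · intro i'; exact ⟨e i', rfl⟩

lemma slide {k : ℕ} (b t : Fin k → ℝ) (hb : ∀ i, 0 ≤ b i) (i₀ : Fin k) (ht0 : 0 < t i₀) :
    ∃ b₂ : Fin k → ℝ, (∀ i, 0 ≤ b₂ i) ∧ (∃ i, b₂ i = 0) ∧
      (∀ x : Fin k → ℝ, ∑ i, t i * x i = 0 → ∑ i, b₂ i * x i = ∑ i, b i * x i) := by
  classical
  set S : Finset (Fin k) := Finset.univ.filter (fun i => 0 < t i) with hS
  have hSne : S.Nonempty := ⟨i₀, by simp [hS, ht0]⟩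
  obtain ⟨i₁, hi₁S, hmin⟩ := S.exists_min_image (fun i => b i / t i) hSne
  have hti₁ : 0 < t i₁ := by simpa [hS] using hi₁S
  set τ := b i₁ / t i₁ with hτ
  have hτ0 : 0 ≤ τ := div_nonneg (hb i₁) hti₁.le
  refine ⟨fun i => b i - τ * t i, ?_, ⟨i₁, by show b i₁ - τ * t i₁ = 0; rw [hτ, div_mul_cancel₀ (b i₁) hti₁.ne', sub_self]⟩, ?_⟩
  · intro i
    show 0 ≤ b i - τ * t i
    rcases le_or_gt (t i) 0 with h | h
    · nlinarith [hb i, mul_nonpos_of_nonneg_of_nonpos hτ0 h]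
    · have h1 : τ ≤ b i / t i := hmin i (by simp [hS, h])
      have h2 : τ * t i ≤ b i := (le_div_iff₀ h).1 h1
      linarith
  · intro x hx
    have : ∑ i, (b i - τ * t i) * x i = ∑ i, b i * x i - τ * ∑ i, t i * x i := by
      rw [Finset.mul_sum, ← Finset.sum_sub_distrib]
      exact Finset.sum_congr rfl fun i _ => by ring
    rw [this, hx, mul_zero, sub_zero]

lemma reduce {P : Type*} [Fintype P] (B : P → ℝ) :
    ∀ (k : ℕ) (b : Fin k → ℝ) (D : Fin k → P → ℕ),
    (∀ i, 0 ≤ b i) → (∀ i, b i ≠ 0 → D i ≠ 0) → (∀ p, ∑ i, b i * (D i p : ℝ) ≤ B p) →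
    ∃ (k' : ℕ) (b' : Fin k' → ℝ) (D' : Fin k' → P → ℕ),
      k' ≤ Fintype.card P + 1 ∧ (∀ i, 0 < b' i) ∧ (∀ i, D' i ≠ 0) ∧
      (∀ p, ∑ i, b' i * (D' i p : ℝ) ≤ B p) ∧ (∑ i, b' i = ∑ i, b i) ∧
      (∀ i', ∃ i, D' i' = D i) := by
  intro k
  induction k using Nat.strong_induction_on with
  | _ k IH =>
  intro b D hb hbD hcon
  by_cases hzero : ∃ i, b i = 0
  · obtain ⟨k₁, b₁, D₁, hk₁, hk₁lt, hb₁pos, hD₁ne, hsum₁, hsump₁, hDof₁⟩ :=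
      filter_step b D hb hbD
    obtain ⟨k', b', D', hk', hb', hD', hcon', hsum', hDof'⟩ :=
      IH k₁ (hk₁lt hzero) b₁ D₁ (fun i => (hb₁pos i).le) (fun i _ => hD₁ne i)
        (fun p => (hsump₁ p).le.trans (hcon p))
    refine ⟨k', b', D', hk', hb', hD', hcon', by rw [hsum', hsum₁], fun i' => ?_⟩
    obtain ⟨i₁, hi₁⟩ := hDof' i'
    obtain ⟨i, hi⟩ := hDof₁ i₁
    exact ⟨i, by rw [hi₁, hi]⟩
  · push_neg at hzero
    by_cases hk : k ≤ Fintype.card P + 1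
    · exact ⟨k, b, D, hk, fun i => lt_of_le_of_ne (hb i) (Ne.symm (hzero i)),
        fun i => hbD i (hzero i), hcon, rfl, fun i => ⟨i, rfl⟩⟩
    · push_neg at hk
      -- linear dependence of (D i, 1) in (P → ℝ) × ℝ
      set w : Fin k → (P → ℝ) × ℝ := fun i => ((fun p => (D i p : ℝ)), 1) with hw
      have hnli : ¬ LinearIndependent ℝ w := by
        intro hli
        have h1 := hli.fintype_card_le_finrank
        rw [Fintype.card_fin] at h1
        have h2 : Module.finrank ℝ ((P → ℝ) × ℝ) = Fintype.card P + 1 := by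
          simp [Module.finrank_prod, Module.finrank_pi]
        omega
      obtain ⟨g, hgsum, i₀, hgi₀⟩ := Fintype.not_linearIndependent_iff.1 hnli
      have key : ∀ (t : Fin k → ℝ), (∑ i, t i • w i = 0) → ∀ (j₀ : Fin k), 0 < t j₀ →
          ∃ (k' : ℕ) (b' : Fin k' → ℝ) (D' : Fin k' → P → ℕ),
            k' ≤ Fintype.card P + 1 ∧ (∀ i, 0 < b' i) ∧ (∀ i, D' i ≠ 0) ∧
            (∀ p, ∑ i, b' i * (D' i p : ℝ) ≤ B p) ∧ (∑ i, b' i = ∑ i, b i) ∧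
            (∀ i', ∃ i, D' i' = D i) := by
        intro t htsum j₀ htj₀
        have ht1 : ∀ p, ∑ i, t i * (D i p : ℝ) = 0 := by
          intro p
          have h1 := congrArg Prod.fst htsum
          rw [Prod.fst_sum] at h1
          have h2 := congrFun h1 p
          simpa using h2
        have ht2 : ∑ i, t i = 0 := by
          have h1 := congrArg Prod.snd htsum
          rw [Prod.snd_sum] at h1
          simpa [hw] using h1
        obtain ⟨b₂, hb₂0, hb₂zero, hb₂sum⟩ := slide b t hb j₀ htj₀
        have hb₂sum1 : ∑ i, b₂ i = ∑ i, b i := by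
          have := hb₂sum (fun _ => 1) (by simpa using ht2)
          simpa using this
        have hb₂sump : ∀ p, ∑ i, b₂ i * (D i p : ℝ) = ∑ i, b i * (D i p : ℝ) :=
          fun p => hb₂sum (fun i => (D i p : ℝ)) (ht1 p)
        obtain ⟨k₁, b₁, D₁, hk₁, hk₁lt, hb₁pos, hD₁ne, hsum₁, hsump₁, hDof₁⟩ :=
          filter_step b₂ D hb₂0 (fun i _ => hbD i (hzero i))
        obtain ⟨k', b', D', hk', hb', hD', hcon', hsum', hDof'⟩ :=
          IH k₁ (hk₁lt hb₂zero) b₁ D₁ (fun i => (hb₁pos i).le) (fun i _ => hD₁ne i)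
            (fun p => (hsump₁ p).le.trans (le_of_eq_of_le (hb₂sump p) (hcon p)))
        refine ⟨k', b', D', hk', hb', hD', hcon',
          by rw [hsum', hsum₁, hb₂sum1], fun i' => ?_⟩
        obtain ⟨i₁, hi₁⟩ := hDof' i'
        obtain ⟨i, hi⟩ := hDof₁ i₁
        exact ⟨i, by rw [hi₁, hi]⟩
      rcases hgi₀.lt_or_gt with hneg | hpos
      · refine key (-g) ?_ i₀ (by simpa using hneg)
        rw [← neg_zero, ← hgsum, ← Finset.sum_neg_distrib]
        exact Finset.sum_congr rfl fun i _ => by simp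
      · exact key g hgsum i₀ hpos

def DSet {V : Type*} [AddCommGroup V] [Module ℚ V] {P : Type*} [Fintype P]
    (c : P → V) (B : P → ℝ) (r : ℕ) : Set ℝ :=
  {s | ∃ (k : ℕ) (b : Fin k → ℝ) (D : Fin k → P → ℕ),
    (∀ i, 0 < b i) ∧ (∀ i, D i ≠ 0) ∧ (∀ p, ∑ i, b i * (D i p : ℝ) ≤ B p) ∧
    Module.finrank ℚ (Submodule.span ℚ
      (Set.range fun i : Fin k => ∑ p, (D i p : ℚ) • c p)) ≤ r ∧
    ∑ i, b i = s}

section Main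

variable {V : Type*} [AddCommGroup V] [Module ℚ V] [FiniteDimensional ℚ V]
  {P : Type*} [Fintype P]

lemma zero_mem_DSet (c : P → V) (B : P → ℝ) (hB : ∀ p, 0 ≤ B p) (r : ℕ) :
    (0 : ℝ) ∈ DSet c B r := by
  refine ⟨0, Fin.elim0, Fin.elim0, fun i => i.elim0, fun i => i.elim0,
    fun p => by simpa using hB p, ?_, by simp⟩
  have : (Set.range fun i : Fin 0 => ∑ p, ((Fin.elim0 i : P → ℕ) p : ℚ) • c p) = ∅ :=
    Set.range_eq_empty _
  rw [this, Submodule.span_empty]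
  simp

lemma sum_le_of_constraint {k : ℕ} (B : P → ℝ) (b : Fin k → ℝ) (D : Fin k → P → ℕ)
    (hb : ∀ i, 0 < b i) (hD : ∀ i, D i ≠ 0) (hcon : ∀ p, ∑ i, b i * (D i p : ℝ) ≤ B p) :
    ∑ i, b i ≤ ∑ p, B p := by
  have h1 : ∀ i, b i ≤ ∑ p, b i * (D i p : ℝ) := by
    intro i
    obtain ⟨p₀, hp₀⟩ := Function.ne_iff.1 (hD i)
    have h2 : b i ≤ b i * (D i p₀ : ℝ) := by
      have : (1 : ℝ) ≤ (D i p₀ : ℝ) := by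
        exact_mod_cast Nat.one_le_iff_ne_zero.2 hp₀
      nlinarith [hb i]
    refine h2.trans (Finset.single_le_sum (f := fun p => b i * (D i p : ℝ))
      (fun p _ => mul_nonneg (hb i).le (Nat.cast_nonneg _)) (Finset.mem_univ p₀))
  calc ∑ i, b i ≤ ∑ i, ∑ p, b i * (D i p : ℝ) := Finset.sum_le_sum fun i _ => h1 i
    _ = ∑ p, ∑ i, b i * (D i p : ℝ) := Finset.sum_comm
    _ ≤ ∑ p, B p := Finset.sum_le_sum fun p _ => hcon p

lemma DSet_bddAbove (c : P → V) (B : P → ℝ) (r : ℕ) : BddAbove (DSet c B r) := by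
  refine ⟨∑ p, B p, fun s hs => ?_⟩
  obtain ⟨k, b, D, hb, hD, hcon, -, hsum⟩ := hs
  rw [← hsum]
  exact sum_le_of_constraint B b D hb hD hcon

lemma attained (c : P → V) (B : P → ℝ) (hB : ∀ p, 0 ≤ B p) (r : ℕ) :
    sSup (DSet c B r) ∈ DSet c B r := by
  classical
  set C := ∑ p, B p with hC
  have hC0 : 0 ≤ C := Finset.sum_nonneg fun p _ => hB p
  have hBC : ∀ p, B p ≤ C := fun p =>
    Finset.single_le_sum (fun q _ => hB q) (Finset.mem_univ p)
  have hbddA := DSet_bddAbove c B r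
  obtain ⟨seq, -, hseqlim, hseqmem⟩ :=
    exists_seq_tendsto_sSup (α := ℝ) ⟨0, zero_mem_DSet c B hB r⟩ hbddA
  set m := Fintype.card P + 1 with hm
  have hred : ∀ j : ℕ, ∃ (k : ℕ) (b : Fin k → ℝ) (D : Fin k → P → ℕ),
      k ≤ m ∧ (∀ i, 0 < b i) ∧ (∀ i, D i ≠ 0) ∧
      (∀ p, ∑ i, b i * (D i p : ℝ) ≤ B p) ∧
      Module.finrank ℚ (Submodule.span ℚ
        (Set.range fun i : Fin k => ∑ p, (D i p : ℚ) • c p)) ≤ r ∧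
      ∑ i, b i = seq j := by
    intro j
    obtain ⟨k₀, b₀, D₀, hb₀, hD₀, hcon₀, hrk₀, hsum₀⟩ := hseqmem j
    obtain ⟨k, b, D, hk, hbpos, hDne, hcon, hsum, hDof⟩ :=
      reduce B k₀ b₀ D₀ (fun i => (hb₀ i).le) (fun i _ => hD₀ i) hcon₀
    refine ⟨k, b, D, hk, hbpos, hDne, hcon, ?_, by rw [hsum, hsum₀]⟩
    refine le_trans (Submodule.finrank_mono ?_) hrk₀
    rw [Submodule.span_le]
    rintro x ⟨i, rfl⟩
    show (∑ p, (D i p : ℚ) • c p) ∈ _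
    obtain ⟨i₀, hi₀⟩ := hDof i
    rw [hi₀]
    exact Submodule.subset_span ⟨i₀, rfl⟩
  choose kk bs Ds hk hbpos hDne hcon hrk hsum using hred
  set bb : ℕ → Fin m → ℝ := fun j i => if h : (i : ℕ) < kk j then bs j ⟨i, h⟩ else 0 with hbb
  set DD : ℕ → Fin m → P → ℕ :=
    fun j i => if h : (i : ℕ) < kk j then Ds j ⟨i, h⟩ else 0 with hDD
  set uu : ℕ → Fin m → P → ℝ := fun j i p => bb j i * (DD j i p : ℝ) with huu
  have hbb0 : ∀ j i, 0 ≤ bb j i := by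
    intro j i; simp only [hbb]; split
    · exact (hbpos j _).le
    · exact le_rfl
  have hbbsum : ∀ j, ∑ i, bb j i = seq j := by
    intro j; simp only [hbb]; rw [pad_sum (hk j)]; exact hsum j
  have huu_eq : ∀ j i p, uu j i p =
      if h : (i : ℕ) < kk j then bs j ⟨i, h⟩ * (Ds j ⟨i, h⟩ p : ℝ) else 0 := by
    intro j i p; simp only [huu, hbb, hDD]; split <;> simp
  have huusum : ∀ j p, ∑ i, uu j i p = ∑ i, bs j i * (Ds j i p : ℝ) := by
    intro j p
    rw [Finset.sum_congr rfl fun i _ => huu_eq j i p]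
    exact pad_sum (hk j) (fun i => bs j i * (Ds j i p : ℝ))
  have huucon : ∀ j p, ∑ i, uu j i p ≤ B p := by
    intro j p; rw [huusum j p]; exact hcon j p
  have hbsC : ∀ j (i : Fin (kk j)), bs j i ≤ C := by
    intro j i
    obtain ⟨p₀, hp₀⟩ := Function.ne_iff.1 (hDne j i)
    have h1 : (1 : ℝ) ≤ (Ds j i p₀ : ℝ) := by exact_mod_cast Nat.one_le_iff_ne_zero.2 hp₀
    have h2 : bs j i ≤ bs j i * (Ds j i p₀ : ℝ) := by nlinarith [hbpos j i]
    have h3 : bs j i * (Ds j i p₀ : ℝ) ≤ ∑ i', bs j i' * (Ds j i' p₀ : ℝ) :=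
      Finset.single_le_sum (f := fun i' => bs j i' * (Ds j i' p₀ : ℝ))
        (fun i' _ => mul_nonneg (hbpos j i').le (Nat.cast_nonneg _)) (Finset.mem_univ i)
    linarith [hcon j p₀, hBC p₀]
  have hbbC : ∀ j i, bb j i ≤ C := by
    intro j i; simp only [hbb]; split
    · exact hbsC j _
    · exact hC0
  have huu0 : ∀ j i p, 0 ≤ uu j i p := fun j i p => mul_nonneg (hbb0 j i) (Nat.cast_nonneg _)
  have huuC : ∀ j i p, uu j i p ≤ C := by
    intro j i p
    have h1 : uu j i p ≤ ∑ i', uu j i' p :=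
      Finset.single_le_sum (fun i' _ => huu0 j i' p) (Finset.mem_univ i)
    linarith [huucon j p, hBC p]
  set Kset : Set ((Fin m → ℝ) × (Fin m → P → ℝ)) :=
    (Set.univ.pi fun _ => Set.Icc 0 C) ×ˢ
      (Set.univ.pi fun _ => Set.univ.pi fun _ => Set.Icc 0 C) with hKset
  have hKcomp : IsCompact Kset :=
    (isCompact_univ_pi fun _ => isCompact_Icc).prod
      (isCompact_univ_pi fun _ => isCompact_univ_pi fun _ => isCompact_Icc)
  have hxmem : ∀ j, ((bb j, uu j) : (Fin m → ℝ) × (Fin m → P → ℝ)) ∈ Kset := by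
    intro j
    refine Set.mem_prod.2 ⟨Set.mem_univ_pi.2 fun i => ⟨hbb0 j i, hbbC j i⟩,
      Set.mem_univ_pi.2 fun i => Set.mem_univ_pi.2 fun p => ⟨huu0 j i p, huuC j i p⟩⟩
  obtain ⟨⟨bl, ul⟩, hmemK, φ, hφ, hlim⟩ := hKcomp.tendsto_subseq hxmem
  have hlimb : ∀ i, Tendsto (fun j => bb (φ j) i) atTop (𝓝 (bl i)) := by
    intro i
    have hcont : Continuous fun z : (Fin m → ℝ) × (Fin m → P → ℝ) => z.1 i :=
      (continuous_apply i).comp continuous_fst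
    exact (hcont.tendsto _).comp hlim
  have hlimu : ∀ i p, Tendsto (fun j => uu (φ j) i p) atTop (𝓝 (ul i p)) := by
    intro i p
    have hcont : Continuous fun z : (Fin m → ℝ) × (Fin m → P → ℝ) => z.2 i p :=
      (continuous_apply p).comp ((continuous_apply i).comp continuous_snd)
    exact (hcont.tendsto _).comp hlim
  have hbl0 : ∀ i, 0 ≤ bl i := fun i => (hmemK.1 i (Set.mem_univ i)).1
  have hul0 : ∀ i p, 0 ≤ ul i p := fun i p => (hmemK.2 i (Set.mem_univ i) p (Set.mem_univ p)).1
  have hsumlim : Tendsto (fun j => ∑ i, bb (φ j) i) atTop (𝓝 (∑ i, bl i)) :=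
    tendsto_finset_sum _ fun i _ => hlimb i
  have hseqφ : Tendsto (fun j => seq (φ j)) atTop (𝓝 (sSup (DSet c B r))) :=
    hseqlim.comp hφ.tendsto_atTop
  have hblsum : ∑ i, bl i = sSup (DSet c B r) :=
    tendsto_nhds_unique (hsumlim.congr fun j => hbbsum (φ j)) hseqφ
  have hulcon : ∀ p, ∑ i, ul i p ≤ B p := by
    intro p
    have h1 : Tendsto (fun j => ∑ i, uu (φ j) i p) atTop (𝓝 (∑ i, ul i p)) :=
      tendsto_finset_sum _ fun i _ => hlimu i p
    exact le_of_tendsto h1 (Filter.Eventually.of_forall fun j => huucon (φ j) p)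
  have hkey : ∀ i, bl i ≠ 0 → ∀ p, ∃ n : ℕ, (n : ℝ) = ul i p / bl i ∧
      ∀ᶠ j in atTop, DD (φ j) i p = n := by
    intro i hbl p
    have hblpos : 0 < bl i := lt_of_le_of_ne (hbl0 i) (Ne.symm hbl)
    have hev : ∀ᶠ j in atTop, 0 < bb (φ j) i :=
      (hlimb i).eventually (eventually_gt_nhds hblpos)
    have hdiv : Tendsto (fun j => uu (φ j) i p / bb (φ j) i) atTop (𝓝 (ul i p / bl i)) :=
      (hlimu i p).div (hlimb i) hbl
    have hDcast : Tendsto (fun j => (DD (φ j) i p : ℝ)) atTop (𝓝 (ul i p / bl i)) := by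
      refine Tendsto.congr' ?_ hdiv
      filter_upwards [hev] with j hj
      simp only [huu]
      rw [mul_div_cancel_left₀ _ (ne_of_gt hj)]
    exact nat_tendsto_eventually_eq hDcast
  choose! N hN1 hN2 using hkey
  set Dlim : Fin m → P → ℕ := fun i => if bl i = 0 then 0 else N i with hDlim
  have hbbne : ∀ j i, bb j i ≠ 0 → DD j i ≠ 0 := by
    intro j i hne
    by_cases h : (i : ℕ) < kk j
    · simp only [hDD]; rw [dif_pos h]; exact hDne j ⟨i, h⟩
    · exfalso; apply hne; simp only [hbb]; rw [dif_neg h]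
  have hsim : ∀ᶠ j in atTop, ∀ i, bl i ≠ 0 →
      (0 < bb (φ j) i ∧ DD (φ j) i = N i) := by
    rw [Filter.eventually_all]
    intro i
    by_cases h : bl i = 0
    · exact Filter.Eventually.of_forall fun j hc => absurd h hc
    · have hblpos : 0 < bl i := lt_of_le_of_ne (hbl0 i) (Ne.symm h)
      have hev : ∀ᶠ j in atTop, 0 < bb (φ j) i :=
        (hlimb i).eventually (eventually_gt_nhds hblpos)
      have hev2 : ∀ᶠ j in atTop, ∀ p, DD (φ j) i p = N i p :=
        Filter.eventually_all.2 fun p => hN2 i h p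
      filter_upwards [hev, hev2] with j h1 h2
      exact fun _ => ⟨h1, funext h2⟩
  obtain ⟨j₀, hj₀⟩ := hsim.exists
  have hDlimne : ∀ i, bl i ≠ 0 → Dlim i ≠ 0 := by
    intro i h
    simp only [hDlim]; rw [if_neg h, ← (hj₀ i h).2]
    exact hbbne (φ j₀) i (ne_of_gt (hj₀ i h).1)
  obtain ⟨k', b', D', hk'le, -, hb'pos, hD'ne, hsum', hsump', hDof'⟩ :=
    filter_step bl Dlim hbl0 hDlimne
  refine ⟨k', b', D', hb'pos, hD'ne, ?_, ?_, by rw [hsum', hblsum]⟩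
  · intro p
    rw [hsump' p]
    have hterm : ∀ i, bl i * (Dlim i p : ℝ) ≤ ul i p := by
      intro i
      by_cases h : bl i = 0
      · rw [h, zero_mul]; exact hul0 i p
      · have heq : (Dlim i p : ℝ) = ul i p / bl i := by
          simp only [hDlim]; rw [if_neg h]; exact hN1 i h p
        rw [heq, mul_div_cancel₀ _ h]
    calc ∑ i, bl i * (Dlim i p : ℝ) ≤ ∑ i, ul i p := Finset.sum_le_sum fun i _ => hterm i
      _ ≤ B p := hulcon p
  · refine le_trans (Submodule.finrank_mono ?_) (hrk (φ j₀))
    rw [Submodule.span_le]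
    rintro x ⟨i', rfl⟩
    show (∑ p, (D' i' p : ℚ) • c p) ∈ _
    obtain ⟨i, hi⟩ := hDof' i'
    rw [hi]
    by_cases h : bl i = 0
    · have hz : Dlim i = 0 := by simp only [hDlim]; rw [if_pos h]
      rw [hz]
      simp
    · have h2 := hj₀ i h
      have h3 : Dlim i = DD (φ j₀) i := by simp only [hDlim]; rw [if_neg h, ← h2.2]
      have h4 : (i : ℕ) < kk (φ j₀) := by
        by_contra hcc
        have hz : bb (φ j₀) i = 0 := by simp only [hbb]; rw [dif_neg hcc]
        exact absurd hz (ne_of_gt h2.1)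
      have h5 : DD (φ j₀) i = Ds (φ j₀) ⟨i, h4⟩ := by simp only [hDD]; rw [dif_pos h4]
      rw [h3, h5]
      exact Submodule.subset_span ⟨⟨i, h4⟩, rfl⟩

end Main

theorem stmt_4 {V : Type*} [AddCommGroup V] [Module ℚ V] [FiniteDimensional ℚ V]
    {P : Type*} [Fintype P] (c : P → V) (B : P → ℝ) (hB : ∀ p, 0 ≤ B p) :
    ∃ (k : ℕ) (b : Fin k → ℝ) (D : Fin k → P → ℕ),
      (∀ i, 0 < b i) ∧ (∀ i, D i ≠ 0) ∧
      (∀ p, ∑ i, b i * (D i p : ℝ) ≤ B p) ∧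
      ∀ (k' : ℕ) (b' : Fin k' → ℝ) (D' : Fin k' → P → ℕ),
        (∀ i, 0 < b' i) → (∀ i, D' i ≠ 0) →
        (∀ p, ∑ i, b' i * (D' i p : ℝ) ≤ B p) →
        (Module.finrank ℚ (Submodule.span ℚ
            (Set.range fun i : Fin k => ∑ p, (D i p : ℚ) • c p)) : ℝ) - ∑ i, b i
          ≤ (Module.finrank ℚ (Submodule.span ℚ
            (Set.range fun i : Fin k' => ∑ p, (D' i p : ℚ) • c p)) : ℝ) - ∑ i, b' i := by
  classical
  set n := Module.finrank ℚ V with hn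
  obtain ⟨r₀, hr₀mem, hr₀min⟩ := Finset.exists_min_image (Finset.range (n + 1))
    (fun r => (r : ℝ) - sSup (DSet c B r)) ⟨0, by simp⟩
  obtain ⟨k, b, D, hbpos, hDne, hcon, hrk, hsum⟩ := attained c B hB r₀
  refine ⟨k, b, D, hbpos, hDne, hcon, ?_⟩
  intro k' b' D' hb' hD' hcon'
  set r' := Module.finrank ℚ (Submodule.span ℚ
    (Set.range fun i : Fin k' => ∑ p, (D' i p : ℚ) • c p)) with hr'
  have h1 : (∑ i, b' i) ∈ DSet c B r' :=
    ⟨k', b', D', hb', hD', hcon', le_rfl, rfl⟩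
  have h2 : ∑ i, b' i ≤ sSup (DSet c B r') := le_csSup (DSet_bddAbove c B r') h1
  have h3 : r' ≤ n := Submodule.finrank_le _
  have h4 : (r₀ : ℝ) - sSup (DSet c B r₀) ≤ (r' : ℝ) - sSup (DSet c B r') :=
    hr₀min r' (Finset.mem_range.2 (Nat.lt_succ_of_le h3))
  have h5 : (Module.finrank ℚ (Submodule.span ℚ
      (Set.range fun i : Fin k => ∑ p, (D i p : ℚ) • c p)) : ℝ) ≤ (r₀ : ℝ) := by
    exact_mod_cast hrk
  rw [hsum]
  linarith
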